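/- Σ_{n=1}^{∞} ζ(2n)·(2n−1)/16^n = π²/16 − 1/2. -/

import Mathlib

open Real

/-- Real Riemann zeta values via the series `∑ 1/k^m`. -/
noncomputable def zetaR (m : ℕ) : ℝ := ∑' k : ℕ, 1 / ((k : ℝ) + 1) ^ m

namespace ZetaSixteenAux

noncomputable def xk (k : ℕ) : ℝ := 1 / (16 * ((k : ℝ) + 1) ^ 2)

noncomputable def F (k n : ℕ) : ℝ := (2 * ((n : ℝ) + 1) - 1) * xk k ^ (n + 1)

lemma xk_nonneg (k : ℕ) : 0 ≤ xk k := by unfold xk; positivity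

lemma xk_lt_one (k : ℕ) : xk k < 1 := by
  unfold xk
  rw [div_lt_one (by positivity)]
  have : (0 : ℝ) ≤ (k : ℝ) := k.cast_nonneg
  nlinarith

lemma F_nonneg (k n : ℕ) : 0 ≤ F k n := by
  unfold F
  have h : (0 : ℝ) ≤ (n : ℝ) := n.cast_nonneg
  have := xk_nonneg k
  have : (0:ℝ) ≤ xk k ^ (n+1) := by positivity
  nlinarith

lemma row_hasSum (x : ℝ) (h0 : 0 ≤ x) (h1 : x < 1) :
    HasSum (fun n : ℕ => (2 * ((n : ℝ) + 1) - 1) * x ^ (n + 1))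
      (x * (1 + x) / (1 - x) ^ 2) := by
  have hx : ‖x‖ < 1 := by rwa [Real.norm_eq_abs, abs_of_nonneg h0]
  have hne : (1 : ℝ) - x ≠ 0 := by intro h; nlinarith
  have hgeo : HasSum (fun n : ℕ => x ^ n) (1 - x)⁻¹ := hasSum_geometric_of_lt_one h0 h1
  have hmul : HasSum (fun n : ℕ => (n : ℝ) * x ^ n) (x / (1 - x) ^ 2) :=
    hasSum_coe_mul_geometric_of_norm_lt_one hx
  have hgeo' : HasSum (fun n : ℕ => x ^ (n + 1)) ((1 - x)⁻¹ - 1) :=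
    (hasSum_nat_add_iff (f := fun n : ℕ => x ^ n) 1).2 (by simpa using hgeo)
  have hmul'' : HasSum (fun n : ℕ => ((n + 1 : ℕ) : ℝ) * x ^ (n + 1)) (x / (1 - x) ^ 2) :=
    (hasSum_nat_add_iff (f := fun n : ℕ => (n : ℝ) * x ^ n) 1).2 (by simpa using hmul)
  have hmul' : HasSum (fun n : ℕ => ((n : ℝ) + 1) * x ^ (n + 1)) (x / (1 - x) ^ 2) := by
    convert hmul'' using 2 with n
    push_cast
    ring
  have hval : x * (1 + x) / (1 - x) ^ 2 = 2 * (x / (1 - x) ^ 2) - ((1 - x)⁻¹ - 1) := by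
    field_simp
    ring
  rw [hval]
  have := (hmul'.mul_left 2).sub hgeo'
  convert this using 2 with n
  · rfl
  ring

lemma row_value (k : ℕ) :
    xk k * (1 + xk k) / (1 - xk k) ^ 2
      = (1 / 2) * (1 / (4 * (k : ℝ) + 3) ^ 2 + 1 / (4 * (k : ℝ) + 5) ^ 2) := by
  have hk : (0 : ℝ) ≤ (k : ℝ) := k.cast_nonneg
  have h2 : (4 * (k : ℝ) + 3) ≠ 0 := by positivity
  have h3 : (4 * (k : ℝ) + 5) ≠ 0 := by positivity
  have h1 : ((k : ℝ) + 1) ≠ 0 := by positivity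
  have key : (1 : ℝ) - xk k
      = (4 * (k : ℝ) + 3) * (4 * (k : ℝ) + 5) / (16 * ((k : ℝ) + 1) ^ 2) := by
    unfold xk
    field_simp
    ring
  rw [key]
  unfold xk
  field_simp
  ring

lemma basel_odd : HasSum (fun k : ℕ => (1 : ℝ) / ((2 * k + 1 : ℕ) : ℝ) ^ 2) (π ^ 2 / 8) := by
  have hbasel : HasSum (fun n : ℕ => (1 : ℝ) / (n : ℝ) ^ 2) (π ^ 2 / 6) := hasSum_zeta_two
  have heven : HasSum (fun k : ℕ => (1 : ℝ) / ((2 * k : ℕ) : ℝ) ^ 2) (π ^ 2 / 24) := by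
    have h := hbasel.mul_left (1 / 4)
    have hv : π ^ 2 / 24 = 1 / 4 * (π ^ 2 / 6) := by ring
    rw [hv]
    convert h using 2 with n
    · rfl
    push_cast
    rw [mul_pow, div_mul_div_comm, one_mul]
    norm_num
  have hinj1 : Function.Injective (fun k : ℕ => 2 * k + 1) := fun a b h => by dsimp only at h; omega
  have hodds : Summable (fun k : ℕ => (1 : ℝ) / ((2 * k + 1 : ℕ) : ℝ) ^ 2) :=
    hbasel.summable.comp_injective hinj1
  obtain ⟨S, hS⟩ := hodds
  have hall : HasSum (fun n : ℕ => (1 : ℝ) / (n : ℝ) ^ 2) (π ^ 2 / 24 + S) :=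
    HasSum.even_add_odd (f := fun n : ℕ => (1 : ℝ) / (n : ℝ) ^ 2) heven hS
  have : π ^ 2 / 24 + S = π ^ 2 / 6 := hall.unique hbasel
  have hSval : S = π ^ 2 / 8 := by linarith
  rwa [hSval] at hS

lemma outer : HasSum (fun k : ℕ => (1 / 2) * (1 / (4 * (k : ℝ) + 3) ^ 2 + 1 / (4 * (k : ℝ) + 5) ^ 2))
    (π ^ 2 / 16 - 1 / 2) := by
  set g : ℕ → ℝ := fun j => (1 : ℝ) / ((2 * (j + 1) + 1 : ℕ) : ℝ) ^ 2 with hgdef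
  have hg : HasSum g (π ^ 2 / 8 - 1) := by
    apply (hasSum_nat_add_iff (f := fun k : ℕ => (1 : ℝ) / ((2 * k + 1 : ℕ) : ℝ) ^ 2) 1).2
    simpa using basel_odd
  have hinje : Function.Injective (fun k : ℕ => 2 * k) := fun a b h => by dsimp only at h; omega
  have hinjo : Function.Injective (fun k : ℕ => 2 * k + 1) := fun a b h => by dsimp only at h; omega
  have hge : Summable (fun k : ℕ => g (2 * k)) := hg.summable.comp_injective hinje
  have hgo : Summable (fun k : ℕ => g (2 * k + 1)) := hg.summable.comp_injective hinjo
  obtain ⟨A, hA⟩ := hge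
  obtain ⟨B, hB⟩ := hgo
  have hAB : A + B = π ^ 2 / 8 - 1 := ((HasSum.even_add_odd (f := g) hA hB).unique hg)
  have hsum := (hA.add hB).mul_left (1 / 2)
  have hval : (1 : ℝ) / 2 * (A + B) = π ^ 2 / 16 - 1 / 2 := by rw [hAB]; ring
  rw [hval] at hsum
  convert hsum using 2 with k
  · rfl
  simp only [hgdef]
  push_cast
  ring_nf

lemma row_hasSum' (k : ℕ) :
    HasSum (fun n : ℕ => F k n)
      ((1 / 2) * (1 / (4 * (k : ℝ) + 3) ^ 2 + 1 / (4 * (k : ℝ) + 5) ^ 2)) := by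
  rw [← row_value k]
  exact row_hasSum (xk k) (xk_nonneg k) (xk_lt_one k)

lemma Fp_summable : Summable (fun p : ℕ × ℕ => F p.1 p.2) := by
  rw [summable_prod_of_nonneg (fun p => F_nonneg p.1 p.2)]
  refine ⟨fun k => (row_hasSum' k).summable, ?_⟩
  apply outer.summable.congr
  intro k
  exact ((row_hasSum' k).tsum_eq).symm

lemma term_eq (n : ℕ) :
    zetaR (2 * (n + 1)) * (2 * ((n : ℝ) + 1) - 1) / 16 ^ (n + 1) = ∑' k : ℕ, F k n := by
  unfold zetaR
  rw [mul_div_assoc, ← tsum_mul_right]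
  apply tsum_congr
  intro k
  unfold F xk
  have hk : ((k : ℝ) + 1) ≠ 0 := by positivity
  rw [pow_mul]
  rw [div_pow, one_pow, mul_pow]
  rw [one_div, one_div, mul_inv, div_eq_mul_inv]
  ring

end ZetaSixteenAux

open ZetaSixteenAux in
theorem zeta_series_sixteen_linear :
    ∑' n : ℕ, zetaR (2 * (n + 1)) * (2 * ((n : ℝ) + 1) - 1) / 16 ^ (n + 1) =
      π ^ 2 / 16 - 1 / 2 := by
  calc ∑' n : ℕ, zetaR (2 * (n + 1)) * (2 * ((n : ℝ) + 1) - 1) / 16 ^ (n + 1)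
      = ∑' (n : ℕ) (k : ℕ), F k n := tsum_congr term_eq
    _ = ∑' (k : ℕ) (n : ℕ), F k n := Fp_summable.tsum_comm
    _ = π ^ 2 / 16 - 1 / 2 := by
        rw [← outer.tsum_eq]
        exact tsum_congr fun k => (row_hasSum' k).tsum_eq
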